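/- Let Γ be an ordered abelian group and S a well-ordered subset of the nonnegative elements of Γ with order type α. Then the submonoid ⟨S⟩ generated by S is well-ordered with order type at most ω^(ω·α), where ω·α is the natural (Hessenberg) product. -/

import Mathlib

noncomputable section

namespace Ordinal

/-- Natural (Hessenberg) addition of ordinals (removed from Mathlib; old definition). -/
noncomputable def nadd : Ordinal.{u} → Ordinal.{u} → Ordinal.{u}
  | a, b =>
    max (⨆ x : Set.Iio a, Order.succ (nadd x.1 b)) (⨆ x : Set.Iio b, Order.succ (nadd a x.1))
termination_by a b => (a, b)
decreasing_by all_goals cases x; decreasing_tactic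

/-- Natural (Hessenberg) multiplication of ordinals (removed from Mathlib; old definition). -/
noncomputable def nmul : Ordinal.{u} → Ordinal.{u} → Ordinal.{u}
  | a, b => sInf {c | ∀ a' < a, ∀ b' < b, nadd (nmul a' b) (nmul a b') < nadd c (nmul a' b')}
termination_by a b => (a, b)

end Ordinal

namespace NaturalOps

scoped infixl:65 " ♯ " => Ordinal.nadd

scoped infixl:70 " ⨳ " => Ordinal.nmul

end NaturalOps

/-- Order type of a well-ordered subset of a linear order. -/
noncomputable def orderTypeOf {Γ : Type*} [LinearOrder Γ] (A : Set Γ) (h : A.IsWF) : Ordinal :=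
  letI : WellFoundedLT A := ⟨h⟩
  Ordinal.type ((· < ·) : A → A → Prop)

/-- Order type of a reverse well-ordered subset of a linear order. -/
noncomputable def revOrderTypeOf {Γ : Type*} [LinearOrder Γ] (A : Set Γ)
    (h : A.WellFoundedOn (· > ·)) : Ordinal :=
  letI : WellFoundedGT A := ⟨h⟩
  Ordinal.type ((· > ·) : A → A → Prop)

namespace Ordinal

open NaturalOps

theorem nadd_def (a b : Ordinal) : a ♯ b =
    max (⨆ x : Set.Iio a, Order.succ (x.1 ♯ b)) (⨆ x : Set.Iio b, Order.succ (a ♯ x.1)) := by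
  rw [nadd]

theorem lt_nadd_iff {a b c : Ordinal} :
    a < b ♯ c ↔ (∃ b' < b, a ≤ b' ♯ c) ∨ ∃ c' < c, a ≤ b ♯ c' := by
  rw [nadd_def, lt_max_iff, Ordinal.lt_iSup_iff, Ordinal.lt_iSup_iff]
  simp [Order.lt_succ_iff]

theorem nadd_le_iff {a b c : Ordinal} :
    b ♯ c ≤ a ↔ (∀ b' < b, b' ♯ c < a) ∧ ∀ c' < c, b ♯ c' < a := by
  rw [nadd_def, max_le_iff, Ordinal.iSup_le_iff, Ordinal.iSup_le_iff]
  simp [Order.succ_le_iff]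

theorem nadd_lt_nadd_left {b c : Ordinal} (h : b < c) (a : Ordinal) : a ♯ b < a ♯ c :=
  lt_nadd_iff.2 (Or.inr ⟨b, h, le_rfl⟩)

theorem nadd_lt_nadd_right {b c : Ordinal} (h : b < c) (a : Ordinal) : b ♯ a < c ♯ a :=
  lt_nadd_iff.2 (Or.inl ⟨b, h, le_rfl⟩)

theorem nadd_le_nadd_left {b c : Ordinal} (h : b ≤ c) (a : Ordinal) : a ♯ b ≤ a ♯ c := by
  rcases lt_or_eq_of_le h with h | rfl
  · exact (nadd_lt_nadd_left h a).le
  · exact le_rfl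

theorem nadd_le_nadd_right {b c : Ordinal} (h : b ≤ c) (a : Ordinal) : b ♯ a ≤ c ♯ a := by
  rcases lt_or_eq_of_le h with h | rfl
  · exact (nadd_lt_nadd_right h a).le
  · exact le_rfl

theorem nadd_le_nadd {a b c d : Ordinal} (h₁ : a ≤ b) (h₂ : c ≤ d) : a ♯ c ≤ b ♯ d :=
  (nadd_le_nadd_left h₂ a).trans (nadd_le_nadd_right h₁ d)

theorem nadd_lt_nadd_of_lt_of_le {a b c d : Ordinal} (h₁ : a < b) (h₂ : c ≤ d) :
    a ♯ c < b ♯ d :=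
  (nadd_le_nadd_left h₂ a).trans_lt (nadd_lt_nadd_right h₁ d)

theorem nadd_lt_nadd_of_le_of_lt {a b c d : Ordinal} (h₁ : a ≤ b) (h₂ : c < d) :
    a ♯ c < b ♯ d :=
  (nadd_le_nadd_right h₁ c).trans_lt (nadd_lt_nadd_left h₂ b)

theorem nadd_lt_nadd_iff_left {a b c : Ordinal} : a ♯ b < a ♯ c ↔ b < c :=
  ⟨fun h => lt_of_not_ge fun h' => (nadd_le_nadd_left h' a).not_gt h,
    fun h => nadd_lt_nadd_left h a⟩

theorem nadd_lt_nadd_iff_right {a b c : Ordinal} : b ♯ a < c ♯ a ↔ b < c :=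
  ⟨fun h => lt_of_not_ge fun h' => (nadd_le_nadd_right h' a).not_gt h,
    fun h => nadd_lt_nadd_right h a⟩

theorem nadd_le_nadd_iff_left {a b c : Ordinal} : a ♯ b ≤ a ♯ c ↔ b ≤ c :=
  ⟨fun h => le_of_not_gt fun h' => (nadd_lt_nadd_left h' a).not_ge h,
    fun h => nadd_le_nadd_left h a⟩

theorem nadd_le_nadd_iff_right {a b c : Ordinal} : b ♯ a ≤ c ♯ a ↔ b ≤ c :=
  ⟨fun h => le_of_not_gt fun h' => (nadd_lt_nadd_right h' a).not_ge h,
    fun h => nadd_le_nadd_right h a⟩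

theorem nadd_comm : ∀ a b : Ordinal, a ♯ b = b ♯ a := by
  intro a b
  induction a using Ordinal.induction generalizing b with
  | h a IHa =>
  induction b using Ordinal.induction with
  | h b IHb =>
  rw [nadd_def, nadd_def b a, max_comm]
  congr 1
  · congr 1; funext x; rw [IHb x.1 x.2]
  · congr 1; funext x; rw [IHa x.1 x.2 b]

@[simp] theorem nadd_zero : ∀ a : Ordinal, a ♯ 0 = a := by
  intro a
  induction a using Ordinal.induction with
  | h a IH =>
  refine le_antisymm (nadd_le_iff.2 ⟨fun a' ha => by rw [IH a' ha]; exact ha,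
    fun c hc => absurd hc (not_lt_of_ge zero_le)⟩) ?_
  refine le_of_forall_lt fun c hc => ?_
  rw [← IH c hc]
  exact nadd_lt_nadd_right hc 0

@[simp] theorem zero_nadd (a : Ordinal) : 0 ♯ a = a := by
  rw [nadd_comm, nadd_zero]

theorem nadd_assoc : ∀ a b c : Ordinal, a ♯ b ♯ c = a ♯ (b ♯ c) := by
  intro a b c
  induction a using Ordinal.induction generalizing b c with
  | h a IHa =>
  induction b using Ordinal.induction generalizing c with
  | h b IHb =>
  induction c using Ordinal.induction with
  | h c IHc =>
  refine le_antisymm (nadd_le_iff.2 ⟨fun d hd => ?_, fun c' hc => ?_⟩)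
    (nadd_le_iff.2 ⟨fun a' ha => ?_, fun d hd => ?_⟩)
  · rcases lt_nadd_iff.1 hd with ⟨a', ha, hd⟩ | ⟨b', hb, hd⟩
    · refine (nadd_le_nadd_right hd c).trans_lt ?_
      rw [IHa a' ha]
      exact nadd_lt_nadd_right ha _
    · refine (nadd_le_nadd_right hd c).trans_lt ?_
      rw [IHb b' hb]
      exact nadd_lt_nadd_left (nadd_lt_nadd_right hb c) a
  · rw [IHc c' hc]
    exact nadd_lt_nadd_left (nadd_lt_nadd_left hc b) a
  · rw [← IHa a' ha]
    exact nadd_lt_nadd_right (nadd_lt_nadd_right ha b) c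
  · rcases lt_nadd_iff.1 hd with ⟨b', hb, hd⟩ | ⟨c', hc, hd⟩
    · refine (nadd_le_nadd_left hd a).trans_lt ?_
      rw [← IHb b' hb]
      exact nadd_lt_nadd_right (nadd_lt_nadd_left hb a) c
    · refine (nadd_le_nadd_left hd a).trans_lt ?_
      rw [← IHc c' hc]
      exact nadd_lt_nadd_left hc _

instance : Std.Associative Ordinal.nadd := ⟨nadd_assoc⟩

instance : Std.Commutative Ordinal.nadd := ⟨nadd_comm⟩

theorem le_self_nadd {a b : Ordinal} : a ≤ a ♯ b := by
  simpa using nadd_le_nadd_left (zero_le : (0 : Ordinal) ≤ b) a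

theorem nadd_one : ∀ a : Ordinal, a ♯ 1 = Order.succ a := by
  intro a
  induction a using Ordinal.induction with
  | h a IH =>
  refine le_antisymm (nadd_le_iff.2 ⟨fun a' ha => ?_, fun c hc => ?_⟩) ?_
  · rw [IH a' ha]; exact Order.succ_lt_succ ha
  · rw [Ordinal.lt_one_iff_zero.1 hc, nadd_zero]; exact Order.lt_succ a
  · refine Order.succ_le_of_lt ?_
    simpa using nadd_lt_nadd_left zero_lt_one a

theorem nadd_succ (a b : Ordinal) : a ♯ Order.succ b = Order.succ (a ♯ b) := by
  rw [← nadd_one (a ♯ b), nadd_assoc, nadd_one]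

theorem succ_nadd (a b : Ordinal) : Order.succ a ♯ b = Order.succ (a ♯ b) := by
  rw [nadd_comm, nadd_succ, nadd_comm]

theorem one_nadd (a : Ordinal) : 1 ♯ a = Order.succ a := by
  rw [nadd_comm, nadd_one]

theorem add_le_nadd : ∀ a b : Ordinal, a + b ≤ a ♯ b := by
  intro a b
  induction b using Ordinal.induction with
  | h b IH =>
  rcases zero_or_succ_or_isSuccLimit b with rfl | ⟨c, rfl⟩ | hb
  · simp
  · rw [add_succ, nadd_succ]
    exact Order.succ_le_succ (IH c (Order.lt_succ c))
  · exact (add_le_iff_of_isSuccLimit hb).2 fun d hd =>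
      (IH d hd).trans (nadd_le_nadd_left hd.le a)

theorem nmul_def (a b : Ordinal) : a ⨳ b =
    sInf {c | ∀ a' < a, ∀ b' < b, a' ⨳ b ♯ a ⨳ b' < c ♯ a' ⨳ b'} := by
  rw [nmul]

theorem nmul_nonempty (a b : Ordinal.{u}) :
    {c : Ordinal.{u} | ∀ a' < a, ∀ b' < b, a' ⨳ b ♯ a ⨳ b' < c ♯ a' ⨳ b'}.Nonempty := by
  refine ⟨⨆ p : Set.Iio a × Set.Iio b, (p.1.1 ⨳ b ♯ a ⨳ p.2.1 + 1),
    fun a' ha b' hb => ?_⟩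
  exact (Ordinal.lt_iSup_add_one (fun p : Set.Iio a × Set.Iio b => p.1.1 ⨳ b ♯ a ⨳ p.2.1)
    (⟨a', ha⟩, ⟨b', hb⟩)).trans_le le_self_nadd

theorem nmul_nadd_lt {a b a' b' : Ordinal} (ha : a' < a) (hb : b' < b) :
    a' ⨳ b ♯ a ⨳ b' < a ⨳ b ♯ a' ⨳ b' := by
  rw [nmul_def a b]
  exact csInf_mem (nmul_nonempty a b) a' ha b' hb

theorem nmul_nadd_le {a b a' b' : Ordinal} (ha : a' ≤ a) (hb : b' ≤ b) :
    a' ⨳ b ♯ a ⨳ b' ≤ a ⨳ b ♯ a' ⨳ b' := by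
  rcases lt_or_eq_of_le ha with ha | rfl
  · rcases lt_or_eq_of_le hb with hb | rfl
    · exact (nmul_nadd_lt ha hb).le
    · rw [nadd_comm]
  · exact le_rfl

theorem lt_nmul_iff {a b c : Ordinal} :
    c < a ⨳ b ↔ ∃ a' < a, ∃ b' < b, c ♯ a' ⨳ b' ≤ a' ⨳ b ♯ a ⨳ b' := by
  refine ⟨fun h => ?_, ?_⟩
  · rw [nmul_def] at h
    have := notMem_of_lt_csInf h (OrderBot.bddBelow _)
    simp only [Set.mem_setOf_eq] at this
    push_neg at this
    exact this
  · rintro ⟨a', ha, b', hb, h⟩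
    have := h.trans_lt (nmul_nadd_lt ha hb)
    rwa [nadd_lt_nadd_iff_right] at this

theorem nmul_le_iff {a b c : Ordinal} :
    a ⨳ b ≤ c ↔ ∀ a' < a, ∀ b' < b, a' ⨳ b ♯ a ⨳ b' < c ♯ a' ⨳ b' := by
  rw [← not_iff_not]
  push_neg
  exact lt_nmul_iff

theorem nmul_comm : ∀ a b : Ordinal, a ⨳ b = b ⨳ a := by
  intro a b
  induction a using Ordinal.induction generalizing b with
  | h a IHa =>
  induction b using Ordinal.induction with
  | h b IHb =>
  rw [nmul_def, nmul_def b a]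
  congr 1
  ext x
  constructor <;> intro H c hc d hd
  · have := H d hd c hc
    rw [IHa d hd b, IHb c hc, IHa d hd c, nadd_comm (b ⨳ d)] at this
    exact this
  · have := H d hd c hc
    rw [← IHb d hd, ← IHa c hc b, ← IHa c hc d, nadd_comm (a ⨳ d)] at this
    exact this

@[simp] theorem nmul_zero (a : Ordinal) : a ⨳ 0 = 0 :=
  le_antisymm (nmul_le_iff.2 fun _ _ b hb => absurd hb (not_lt_of_ge zero_le)) zero_le

@[simp] theorem zero_nmul (a : Ordinal) : 0 ⨳ a = 0 := by
  rw [nmul_comm, nmul_zero]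

theorem nmul_one : ∀ a : Ordinal, a ⨳ 1 = a := by
  intro a
  induction a using Ordinal.induction with
  | h a IH =>
  refine le_antisymm (nmul_le_iff.2 fun a' ha b' hb => ?_) (le_of_forall_lt fun c hc => ?_)
  · rw [Ordinal.lt_one_iff_zero.1 hb]
    simpa [IH a' ha] using ha
  · exact lt_nmul_iff.2 ⟨c, hc, 0, zero_lt_one, by simp [IH c hc]⟩

theorem nmul_lt_nmul_of_pos_left {a b c : Ordinal} (h₁ : a < b) (h₂ : 0 < c) :
    c ⨳ a < c ⨳ b :=
  lt_nmul_iff.2 ⟨0, h₂, a, h₁, by simp⟩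

theorem nmul_le_nmul_left {a b : Ordinal} (h : a ≤ b) (c : Ordinal) : c ⨳ a ≤ c ⨳ b := by
  rcases lt_or_eq_of_le h with h₁ | rfl
  · rcases eq_or_ne c 0 with rfl | h₂
    · simp
    · exact (nmul_lt_nmul_of_pos_left h₁ (pos_iff_ne_zero.2 h₂)).le
  · exact le_rfl

theorem nmul_nadd : ∀ a b c : Ordinal, a ⨳ (b ♯ c) = a ⨳ b ♯ a ⨳ c := by
  intro a b c
  induction a using Ordinal.induction generalizing b c with
  | h a IHa =>
  induction b using Ordinal.induction generalizing c with
  | h b IHb =>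
  induction c using Ordinal.induction with
  | h c IHc =>
  refine le_antisymm (nmul_le_iff.2 fun a' ha d hd => ?_)
    (nadd_le_iff.2 ⟨fun d hd => ?_, fun d hd => ?_⟩)
  · rw [IHa a' ha]
    rcases lt_nadd_iff.1 hd with ⟨b', hb, hd⟩ | ⟨c', hc, hd⟩
    · have := nadd_lt_nadd_of_lt_of_le (nmul_nadd_lt ha hb) (nmul_nadd_le ha.le hd)
      rw [IHa a' ha, IHb b' hb] at this
      have key : (a' ⨳ b ♯ a' ⨳ c ♯ a ⨳ d) ♯ (a ⨳ b' ♯ a' ⨳ b') <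
          (a ⨳ b ♯ a ⨳ c ♯ a' ⨳ d) ♯ (a ⨳ b' ♯ a' ⨳ b') := by
        convert this using 1 <;> ac_rfl
      exact nadd_lt_nadd_iff_right.1 key
    · have := nadd_lt_nadd_of_lt_of_le (nmul_nadd_lt ha hc) (nmul_nadd_le ha.le hd)
      rw [IHa a' ha, IHc c' hc] at this
      have key : (a' ⨳ b ♯ a' ⨳ c ♯ a ⨳ d) ♯ (a ⨳ c' ♯ a' ⨳ c') <
          (a ⨳ b ♯ a ⨳ c ♯ a' ⨳ d) ♯ (a ⨳ c' ♯ a' ⨳ c') := by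
        convert this using 1 <;> ac_rfl
      exact nadd_lt_nadd_iff_right.1 key
  · rcases lt_nmul_iff.1 hd with ⟨a', ha, b', hb, hd⟩
    refine lt_nmul_iff.2 ⟨a', ha, b' ♯ c, nadd_lt_nadd_right hb c, ?_⟩
    rw [IHa a' ha, IHa a' ha, IHb b' hb]
    have key := nadd_le_nadd_right hd (a ⨳ c ♯ a' ⨳ c)
    convert key using 1 <;> ac_rfl
  · rcases lt_nmul_iff.1 hd with ⟨a', ha, c', hc, hd⟩
    refine lt_nmul_iff.2 ⟨a', ha, b ♯ c', nadd_lt_nadd_left hc b, ?_⟩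
    rw [IHa a' ha, IHa a' ha, IHc c' hc]
    have key := nadd_le_nadd_right hd (a ⨳ b ♯ a' ⨳ b)
    convert key using 1 <;> ac_rfl

theorem nmul_add_one (a b : Ordinal) : a ⨳ (b + 1) = a ⨳ b ♯ a := by
  rw [add_one_eq_succ, ← nadd_one, nmul_nadd, nmul_one]

end Ordinal

section Auxiliary

open Ordinal NaturalOps

namespace OrdArith

/-- Core: ω-powers are closed under natural addition (auxiliary form). -/
private theorem na_aux {g : Ordinal} (hg : ∀ a b, a < ω ^ g → b < ω ^ g → a ♯ b < ω ^ g) :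
    ∀ q r, r < ω ^ g → ω ^ g * q ♯ r = ω ^ g * q + r := by
  have hω : (ω ^ g : Ordinal) ≠ 0 := (opow_pos g omega0_pos).ne'
  intro q
  induction q using Ordinal.induction with
  | h q IHq =>
    intro r
    induction r using Ordinal.induction with
    | h r IHr =>
      intro hr
      refine le_antisymm ?_ (add_le_nadd _ _)
      rw [nadd_le_iff]
      constructor
      · intro x hx
        have hpq : x / ω ^ g < q := (Ordinal.div_lt hω).2 hx
        have hs : x % ω ^ g < ω ^ g := mod_lt x hω
        calc x ♯ r = (ω ^ g * (x / ω ^ g) + x % ω ^ g) ♯ r := by rw [Ordinal.div_add_mod]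
          _ = (ω ^ g * (x / ω ^ g) ♯ x % ω ^ g) ♯ r := by rw [IHq _ hpq _ hs]
          _ = ω ^ g * (x / ω ^ g) ♯ (x % ω ^ g ♯ r) := nadd_assoc _ _ _
          _ = ω ^ g * (x / ω ^ g) + (x % ω ^ g ♯ r) := IHq _ hpq _ (hg _ _ hs hr)
          _ < ω ^ g * (x / ω ^ g) + ω ^ g := add_lt_add_right (hg _ _ hs hr) _
          _ = ω ^ g * (x / ω ^ g + 1) := (mul_add_one _ _).symm
          _ ≤ ω ^ g * q := mul_le_mul_right (Order.add_one_le_of_lt hpq) _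
          _ ≤ ω ^ g * q + r := le_self_add
      · intro r' hr'
        rw [IHr _ hr' (hr'.trans hr)]
        exact add_lt_add_right hr' _

private theorem s_aux {g : Ordinal} (hg : ∀ a b, a < ω ^ g → b < ω ^ g → a ♯ b < ω ^ g) :
    ∀ N : ℕ, ∀ a b : ℕ, a + b ≤ N → ∀ x y : Ordinal,
      x < ω ^ g * a → y ≤ ω ^ g * b → x ♯ y < ω ^ g * (a + b : ℕ) := by
  have hω : (ω ^ g : Ordinal) ≠ 0 := (opow_pos g omega0_pos).ne'
  intro N
  induction N with
  | zero =>
    intro a b hab x y hx _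
    have ha : a = 0 := by omega
    subst ha
    rw [Nat.cast_zero, mul_zero] at hx
    exact absurd hx (not_lt_of_ge zero_le)
  | succ N IH =>
    intro a b hab x y hx hy
    rcases Nat.eq_zero_or_pos a with rfl | ha
    · rw [Nat.cast_zero, mul_zero] at hx
      exact absurd hx (not_lt_of_ge zero_le)
    -- decompose x and y
    have hpa : x / ω ^ g < (a : Ordinal) := (Ordinal.div_lt hω).2 hx
    obtain ⟨p, hp⟩ := lt_omega0.1 (hpa.trans_le (le_of_lt (nat_lt_omega0 a)))
    have hpa' : p < a := by exact_mod_cast hp ▸ hpa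
    have hqb : y / ω ^ g < ((b : Ordinal) + 1) := by
      refine (Ordinal.div_lt hω).2 (lt_of_le_of_lt hy ?_)
      rw [mul_add_one]
      exact lt_add_of_pos_right _ (opow_pos g omega0_pos)
    obtain ⟨q, hq⟩ := lt_omega0.1 (hqb.trans_le (le_of_lt (nat_lt_omega0 (b+1))))
    have hqb' : q ≤ b := by
      have := hq ▸ hqb
      exact_mod_cast Nat.lt_succ_iff.1 (by exact_mod_cast this)
    have hs : x % ω ^ g < ω ^ g := mod_lt x hω
    have ht : y % ω ^ g < ω ^ g := mod_lt y hω
    -- the coefficient inequality, by the inner nadd_le_iff argument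
    have E : ω ^ g * (p : Ordinal) ♯ ω ^ g * (q : Ordinal) ≤ ω ^ g * ((p + q : ℕ) : Ordinal) := by
      rw [nadd_le_iff]
      constructor
      · intro x' hx'
        exact IH p q (by omega) x' _ hx' le_rfl
      · intro y' hy'
        have := IH q p (by omega) y' _ hy' le_rfl
        rwa [nadd_comm, show ((q + p : ℕ) : Ordinal) = ((p + q : ℕ) : Ordinal) by
          norm_cast; omega] at this
    calc x ♯ y = (ω ^ g * (x / ω ^ g) + x % ω ^ g) ♯ (ω ^ g * (y / ω ^ g) + y % ω ^ g) := by
          rw [Ordinal.div_add_mod, Ordinal.div_add_mod]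
      _ = (ω ^ g * (p:Ordinal) ♯ x % ω ^ g) ♯ (ω ^ g * (q:Ordinal) ♯ y % ω ^ g) := by
          rw [na_aux hg _ _ hs, na_aux hg _ _ ht, hp, hq]
      _ = (ω ^ g * (p:Ordinal) ♯ ω ^ g * (q:Ordinal)) ♯ (x % ω ^ g ♯ y % ω ^ g) := by
          rw [nadd_assoc, nadd_assoc]
          congr 1
          rw [← nadd_assoc, ← nadd_assoc, nadd_comm (x % ω ^ g)]
      _ ≤ ω ^ g * ((p + q : ℕ) : Ordinal) ♯ (x % ω ^ g ♯ y % ω ^ g) := nadd_le_nadd_right E _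
      _ = ω ^ g * ((p + q : ℕ) : Ordinal) + (x % ω ^ g ♯ y % ω ^ g) :=
          na_aux hg _ _ (hg _ _ hs ht)
      _ < ω ^ g * ((p + q : ℕ) : Ordinal) + ω ^ g := add_lt_add_right (hg _ _ hs ht) _
      _ = ω ^ g * ((p + q + 1 : ℕ) : Ordinal) := by
          rw [← mul_add_one]; norm_cast
      _ ≤ ω ^ g * ((a + b : ℕ) : Ordinal) := by
          refine mul_le_mul_right (Nat.cast_le.2 ?_) _
          omega

/-- ω-powers are closed under natural addition. -/
theorem nadd_principal : ∀ e : Ordinal, ∀ a b, a < ω ^ e → b < ω ^ e → a ♯ b < ω ^ e := by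
  intro e
  induction e using Ordinal.induction with
  | h e IH =>
    intro a b ha hb
    rcases eq_or_ne a 0 with rfl | ha0
    · rwa [zero_nadd]
    rcases eq_or_ne b 0 with rfl | hb0
    · rwa [nadd_zero]
    set g := max (log ω a) (log ω b) with hgdef
    have hge : g < e := by
      apply max_lt
      · exact (lt_opow_iff_log_lt one_lt_omega0 ha0).1 ha
      · exact (lt_opow_iff_log_lt one_lt_omega0 hb0).1 hb
    have hg : ∀ u v, u < ω ^ g → v < ω ^ g → u ♯ v < ω ^ g := IH g hge
    have hω : (ω ^ g : Ordinal) ≠ 0 := (opow_pos g omega0_pos).ne'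
    obtain ⟨m, hm⟩ := lt_omega0.1 ((Ordinal.div_lt hω).2 (by
      calc a < ω ^ (log ω a + 1) := lt_opow_succ_log_self one_lt_omega0 a
        _ ≤ ω ^ (g + 1) := opow_le_opow_right omega0_pos (add_le_add_left (le_max_left _ _) 1)
        _ = ω ^ g * ω := opow_succ ω g))
    obtain ⟨n, hn⟩ := lt_omega0.1 ((Ordinal.div_lt hω).2 (by
      calc b < ω ^ (log ω b + 1) := lt_opow_succ_log_self one_lt_omega0 b
        _ ≤ ω ^ (g + 1) := opow_le_opow_right omega0_pos (add_le_add_left (le_max_right _ _) 1)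
        _ = ω ^ g * ω := opow_succ ω g))
    have ha' : a < ω ^ g * ((m + 1 : ℕ) : Ordinal) := by
      have := Ordinal.lt_mul_succ_div a hω
      rwa [hm, show (Order.succ (m : Ordinal)) = ((m + 1 : ℕ) : Ordinal) by
        rw [Nat.cast_add, Nat.cast_one, Ordinal.add_one_eq_succ]] at this
    have hb' : b < ω ^ g * ((n + 1 : ℕ) : Ordinal) := by
      have := Ordinal.lt_mul_succ_div b hω
      rwa [hn, show (Order.succ (n : Ordinal)) = ((n + 1 : ℕ) : Ordinal) by
        rw [Nat.cast_add, Nat.cast_one, Ordinal.add_one_eq_succ]] at this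
    have := s_aux hg ((m+1)+(n+1)) (m+1) (n+1) le_rfl a b ha' hb'.le
    exact this.trans (omega0_opow_mul_nat_lt hge _)

/-- `ω^e*q ♯ r = ω^e*q + r` for `r < ω^e`. -/
theorem na {e : Ordinal} (q : Ordinal) {r : Ordinal} (hr : r < ω ^ e) :
    ω ^ e * q ♯ r = ω ^ e * q + r :=
  na_aux (nadd_principal e) q r hr

theorem sE {e : Ordinal} {a b : ℕ} {x y : Ordinal} (hx : x < ω ^ e * a) (hy : y ≤ ω ^ e * b) :
    x ♯ y < ω ^ e * (a + b : ℕ) :=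
  s_aux (nadd_principal e) (a + b) a b le_rfl x y hx hy

theorem eE (e : Ordinal) (a b : ℕ) : ω ^ e * a ♯ ω ^ e * b ≤ ω ^ e * (a + b : ℕ) := by
  rw [nadd_le_iff]
  constructor
  · intro x hx
    exact sE hx le_rfl
  · intro y hy
    have := sE (e := e) (a := b) (b := a) hy le_rfl
    rwa [nadd_comm, show ((b + a : ℕ) : Ordinal) = ((a + b : ℕ) : Ordinal) by
      norm_cast; omega] at this

/-- `ω^T*c ♯ ω^T = ω^T*(c+1)` -/
theorem na2 {T : Ordinal} : ∀ c : Ordinal, ω ^ T * c ♯ ω ^ T = ω ^ T * (c + 1) := by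
  have hω : (ω ^ T : Ordinal) ≠ 0 := (opow_pos T omega0_pos).ne'
  intro c
  induction c using Ordinal.induction with
  | h c IH =>
    refine le_antisymm ?_ ?_
    · rw [nadd_le_iff]
      constructor
      · intro x hx
        have hpc : x / ω ^ T < c := (Ordinal.div_lt hω).2 hx
        have hs : x % ω ^ T < ω ^ T := mod_lt x hω
        calc x ♯ ω ^ T = (ω ^ T * (x / ω ^ T) + x % ω ^ T) ♯ ω ^ T := by rw [Ordinal.div_add_mod]
          _ = (ω ^ T * (x / ω ^ T) ♯ x % ω ^ T) ♯ ω ^ T := by rw [na _ hs]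
          _ = (ω ^ T * (x / ω ^ T) ♯ ω ^ T) ♯ x % ω ^ T := by
              rw [nadd_assoc, nadd_assoc, nadd_comm (x % ω ^ T)]
          _ = ω ^ T * (x / ω ^ T + 1) ♯ x % ω ^ T := by rw [IH _ hpc]
          _ = ω ^ T * (x / ω ^ T + 1) + x % ω ^ T := na _ hs
          _ < ω ^ T * (x / ω ^ T + 1) + ω ^ T := add_lt_add_right hs _
          _ = ω ^ T * (x / ω ^ T + 1 + 1) := (mul_add_one _ _).symm
          _ ≤ ω ^ T * (c + 1) := by
              refine mul_le_mul_right (add_le_add_left ?_ 1) _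
              exact Order.add_one_le_of_lt hpc
      · intro y hy
        rw [na _ hy, mul_add_one]
        exact add_lt_add_right hy _
    · rw [mul_add_one]
      exact add_le_nadd _ _

/-- `ω^T*q ♯ ω^T*d = ω^T*(q+d)` for natural `d`. -/
theorem na2k {T : Ordinal} (q : Ordinal) : ∀ d : ℕ,
    ω ^ T * q ♯ ω ^ T * (d : Ordinal) = ω ^ T * (q + (d : Ordinal)) := by
  intro d
  induction d with
  | zero => simp
  | succ d IH =>
    have h1 : (ω ^ T * ((d + 1 : ℕ) : Ordinal)) = ω ^ T * (d : Ordinal) ♯ ω ^ T := by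
      rw [na2]; norm_cast
    rw [h1, ← nadd_assoc, IH, na2]
    rw [add_assoc]
    norm_num

/-- `x ♯ δ < x + ω^T*n` whenever `δ < ω^T*n` (n a positive natural). -/
theorem nadd_lt_add_opow_mul {T : Ordinal} {n : ℕ} {x δ : Ordinal}
    (hδ : δ < ω ^ T * (n : Ordinal)) : x ♯ δ < x + ω ^ T * (n : Ordinal) := by
  have hω : (ω ^ T : Ordinal) ≠ 0 := (opow_pos T omega0_pos).ne'
  have hn : n ≠ 0 := by
    rintro rfl
    simp at hδ
  have hd : δ / ω ^ T < (n : Ordinal) := (Ordinal.div_lt hω).2 hδ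
  obtain ⟨d, hdd⟩ := lt_omega0.1 (hd.trans (nat_lt_omega0 n))
  have hdn : d < n := by exact_mod_cast hdd ▸ hd
  have hδ2 : δ % ω ^ T < ω ^ T := mod_lt δ hω
  have hr : x % ω ^ T < ω ^ T := mod_lt x hω
  set q := x / ω ^ T with hqdef
  have hxq : x = ω ^ T * q + x % ω ^ T := (Ordinal.div_add_mod x _).symm
  have key : x ♯ δ = ω ^ T * (q + (d : Ordinal)) + (x % ω ^ T ♯ δ % ω ^ T) := by
    calc x ♯ δ = (ω ^ T * q + x % ω ^ T) ♯ (ω ^ T * ((d:Ordinal)) + δ % ω ^ T) := by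
          rw [← hxq]; rw [show (ω ^ T * ((d:Ordinal)) + δ % ω ^ T) = δ by
            rw [← hdd]; exact Ordinal.div_add_mod δ _]
      _ = (ω ^ T * q ♯ x % ω ^ T) ♯ (ω ^ T * (d:Ordinal) ♯ δ % ω ^ T) := by
          rw [na _ hr, na _ hδ2]
      _ = (ω ^ T * q ♯ ω ^ T * (d:Ordinal)) ♯ (x % ω ^ T ♯ δ % ω ^ T) := by
          rw [nadd_assoc, nadd_assoc]
          congr 1
          rw [← nadd_assoc, ← nadd_assoc, nadd_comm (x % ω ^ T)]
      _ = ω ^ T * (q + (d:Ordinal)) ♯ (x % ω ^ T ♯ δ % ω ^ T) := by rw [na2k]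
      _ = ω ^ T * (q + (d:Ordinal)) + (x % ω ^ T ♯ δ % ω ^ T) :=
          na _ (nadd_principal T _ _ hr hδ2)
  rw [key]
  have hxn : x + ω ^ T * (n : Ordinal) = ω ^ T * (q + (n : Ordinal)) := by
    rw [hxq, add_assoc, mul_add]
    congr 1
    -- x % ω^T + ω^T * n = ω^T * n
    have : (ω ^ T * (n : Ordinal)) = ω ^ T + ω ^ T * ((n - 1 : ℕ) : Ordinal) := by
      rw [← mul_one_add]
      congr 1
      norm_cast
      omega
    rw [this, ← add_assoc, add_omega0_opow hr]
  rw [hxn]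
  calc ω ^ T * (q + (d:Ordinal)) + (x % ω ^ T ♯ δ % ω ^ T)
      < ω ^ T * (q + (d:Ordinal)) + ω ^ T := add_lt_add_right (nadd_principal T _ _ hr hδ2) _
    _ = ω ^ T * (q + (d:Ordinal) + 1) := (mul_add_one _ _).symm
    _ ≤ ω ^ T * (q + (n:Ordinal)) := by
        refine mul_le_mul_right ?_ _
        rw [add_assoc]
        refine add_le_add_right ?_ q
        have : ((d:Ordinal) + 1) = ((d+1 : ℕ) : Ordinal) := by norm_cast
        rw [this]
        exact Nat.cast_le.2 (by omega)

/-- `(x ♯ y) + ω^T*n ≤ (x + ω^T*n) ♯ y`. -/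
theorem H {T : Ordinal} {n : ℕ} (x y : Ordinal) :
    (x ♯ y) + ω ^ T * (n : Ordinal) ≤ (x + ω ^ T * (n : Ordinal)) ♯ y := by
  rcases Nat.eq_zero_or_pos n with rfl | hn
  · simp
  rcases eq_or_ne T 0 with rfl | hT
  · -- finite case : ω^0 * n = n
    simp only [opow_zero, one_mul]
    clear hn
    induction n with
    | zero => simp
    | succ k IHk =>
      calc (x ♯ y) + ((k+1 : ℕ) : Ordinal) = ((x ♯ y) + (k:Ordinal)) + 1 := by
            rw [Nat.cast_add, Nat.cast_one, ← add_assoc]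
        _ ≤ ((x + (k:Ordinal)) ♯ y) + 1 := add_le_add_left IHk 1
        _ = Order.succ ((x + (k:Ordinal)) ♯ y) := by rw [Ordinal.add_one_eq_succ]
        _ = Order.succ (x + (k:Ordinal)) ♯ y := (succ_nadd _ _).symm
        _ = (x + ((k+1:ℕ) : Ordinal)) ♯ y := by
            rw [← Ordinal.add_one_eq_succ, Nat.cast_add, Nat.cast_one, ← add_assoc]
  · -- ω^T*n is a limit ordinal
    have hlim : Order.IsSuccLimit (ω ^ T * (n : Ordinal)) := by
      refine isSuccLimit_mul_left (isSuccLimit_opow_left isSuccLimit_omega0 hT) ?_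
      exact_mod_cast hn
    rw [add_le_iff_of_isSuccLimit hlim]
    intro δ hδ
    calc (x ♯ y) + δ ≤ (x ♯ y) ♯ δ := add_le_nadd _ _
      _ = (x ♯ δ) ♯ y := by rw [nadd_assoc, nadd_assoc, nadd_comm y]
      _ ≤ (x + ω ^ T * (n : Ordinal)) ♯ y :=
          nadd_le_nadd_right (nadd_lt_add_opow_mul hδ).le _

/-- `(β + ω^T) ⨳ n ≥ β ⨳ n + ω^T * n`. -/
theorem G1 {T β : Ordinal} : ∀ n : ℕ,
    β ⨳ (n : Ordinal) + ω ^ T * (n : Ordinal) ≤ (β + ω ^ T) ⨳ (n : Ordinal) := by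
  intro n
  induction n with
  | zero => simp
  | succ n IH =>
    have h1 : ((n + 1 : ℕ) : Ordinal) = (n : Ordinal) + 1 := by norm_cast
    rw [h1, nmul_add_one, nmul_add_one]
    calc β ⨳ (n:Ordinal) ♯ β + ω ^ T * ((n:Ordinal) + 1)
        = (β ⨳ (n:Ordinal) ♯ β + ω ^ T * (n:Ordinal)) + ω ^ T := by
          rw [mul_add_one, add_assoc]
      _ ≤ ((β ⨳ (n:Ordinal) + ω ^ T * (n:Ordinal)) ♯ β) + ω ^ T := by
          refine add_le_add_left ?_ _
          exact H _ _
      _ ≤ (((β + ω ^ T) ⨳ (n:Ordinal)) ♯ β) + ω ^ T := by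
          refine add_le_add_left (nadd_le_nadd_right IH β) _
      _ = ((β ♯ (β + ω ^ T) ⨳ (n:Ordinal)) + ω ^ T * ((1:ℕ) : Ordinal)) := by
          rw [nadd_comm]; norm_num
      _ ≤ (β + ω ^ T * ((1:ℕ):Ordinal)) ♯ (β + ω ^ T) ⨳ (n:Ordinal) := H _ _
      _ = (β + ω ^ T) ⨳ (n:Ordinal) ♯ (β + ω ^ T) := by
          rw [nadd_comm]; norm_num

/-- Key: `ω ⨳ β + δ < ω ⨳ (β + ω^T)` for `δ < ω^(T+1)`. -/
theorem d2weak {β T δ : Ordinal} (hδ : δ < ω ^ (T + 1)) :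
    ω ⨳ β + δ < ω ⨳ (β + ω ^ T) := by
  have hω : (ω ^ T : Ordinal) ≠ 0 := (opow_pos T omega0_pos).ne'
  -- choose n with δ < ω^T * n
  obtain ⟨n, hn⟩ := lt_omega0.1 ((Ordinal.div_lt hω).2 (by
    rw [← opow_succ, ← Ordinal.add_one_eq_succ]; exact hδ))
  have hδn : δ < ω ^ T * ((n+1 : ℕ) : Ordinal) := by
    have := Ordinal.lt_mul_succ_div δ hω
    rwa [hn, show (Order.succ (n : Ordinal)) = ((n + 1 : ℕ) : Ordinal) by
      rw [← Ordinal.add_one_eq_succ]; norm_cast] at this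
  rw [lt_nmul_iff]
  refine ⟨((n+1 : ℕ) : Ordinal), nat_lt_omega0 (n+1), β, lt_add_of_pos_right β (opow_pos T omega0_pos), ?_⟩
  calc (ω ⨳ β + δ) ♯ ((n+1:ℕ):Ordinal) ⨳ β
      ≤ (ω ⨳ β ♯ δ) ♯ ((n+1:ℕ):Ordinal) ⨳ β :=
        nadd_le_nadd_right (add_le_nadd _ _) _
    _ = ω ⨳ β ♯ (β ⨳ ((n+1:ℕ):Ordinal) ♯ δ) := by
        rw [nadd_assoc]
        congr 1
        rw [nadd_comm δ, nmul_comm]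
    _ ≤ ω ⨳ β ♯ (β ⨳ ((n+1:ℕ):Ordinal) + ω ^ T * ((n+1:ℕ):Ordinal)) := by
        refine nadd_le_nadd_left (nadd_lt_add_opow_mul hδn).le _
    _ ≤ ω ⨳ β ♯ (β + ω ^ T) ⨳ ((n+1:ℕ):Ordinal) := nadd_le_nadd_left (G1 (n+1)) _
    _ = ((n+1:ℕ):Ordinal) ⨳ (β + ω ^ T) ♯ ω ⨳ β := by
        rw [nadd_comm, nmul_comm]

/-- Key: `ω ⨳ β ♯ u < ω ⨳ (β + ω^T)` for `u < ω^(T+1)`. -/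
theorem d2 {β T u : Ordinal} (hu : u < ω ^ (T + 1)) :
    ω ⨳ β ♯ u < ω ⨳ (β + ω ^ T) := by
  have hω : (ω ^ T : Ordinal) ≠ 0 := (opow_pos T omega0_pos).ne'
  obtain ⟨n, hn⟩ := lt_omega0.1 ((Ordinal.div_lt hω).2 (by
    rw [← opow_succ, ← Ordinal.add_one_eq_succ]; exact hu))
  have hun : u < ω ^ T * ((n+1 : ℕ) : Ordinal) := by
    have := Ordinal.lt_mul_succ_div u hω
    rwa [hn, show (Order.succ (n : Ordinal)) = ((n + 1 : ℕ) : Ordinal) by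
      rw [← Ordinal.add_one_eq_succ]; norm_cast] at this
  calc ω ⨳ β ♯ u < ω ⨳ β + ω ^ T * ((n+1:ℕ):Ordinal) := nadd_lt_add_opow_mul hun
    _ < ω ⨳ (β + ω ^ T) := d2weak (by
        rw [Ordinal.add_one_eq_succ, opow_succ]
        exact (mul_lt_mul_iff_right₀ (opow_pos T omega0_pos)).2 (nat_lt_omega0 (n+1)))

/-- `(T+1) ⨳ k < ω^(T+1)`. -/
theorem nmul_nat_lt_opow_succ (T : Ordinal) : ∀ k : ℕ, (T + 1) ⨳ (k : Ordinal) < ω ^ (T + 1) := by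
  have hlim : Order.IsSuccLimit (ω ^ (T + 1) : Ordinal) :=
    isSuccLimit_opow_left isSuccLimit_omega0 (by rw [Ordinal.add_one_eq_succ]; exact Ordinal.succ_ne_zero T)
  have hT1 : T + 1 < ω ^ (T + 1) := by
    have h1 : T < ω ^ (T+1) := lt_of_le_of_lt (right_le_opow T one_lt_omega0)
      ((opow_lt_opow_iff_right one_lt_omega0).2 (lt_add_one T))
    rw [Ordinal.add_one_eq_succ]
    exact hlim.succ_lt h1
  intro k
  induction k with
  | zero => rw [Nat.cast_zero, nmul_zero]; exact hlim.pos
  | succ k IH =>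
    have h1 : ((k + 1 : ℕ) : Ordinal) = (k : Ordinal) + 1 := by norm_cast
    rw [h1, nmul_add_one]
    exact nadd_principal _ _ _ IH hT1

end OrdArith

namespace SetLayer

open Set Ordinal NaturalOps Pointwise

variable {Γ : Type*} [LinearOrder Γ]

theorem orderTypeOf_mono {A B : Set Γ} (hA : A.IsWF) (hB : B.IsWF) (h : A ⊆ B) :
    orderTypeOf A hA ≤ orderTypeOf B hB := by
  letI : WellFoundedLT B := ⟨hB⟩
  letI : WellFoundedLT A := ⟨hA⟩
  refine Ordinal.type_le_iff'.2 ⟨⟨⟨Set.inclusion h, Set.inclusion_injective h⟩, Iff.rfl⟩⟩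

theorem orderTypeOf_congr {A B : Set Γ} (hA : A.IsWF) (hB : B.IsWF) (h : A = B) :
    orderTypeOf A hA = orderTypeOf B hB := by
  subst h; rfl

theorem orderTypeOf_empty (h : (∅ : Set Γ).IsWF) : orderTypeOf ∅ h = 0 := by
  letI : WellFoundedLT (∅ : Set Γ) := ⟨h⟩
  exact Ordinal.type_eq_zero_iff_isEmpty.2 (by simp)

theorem eq_empty_of_orderTypeOf_le_zero {A : Set Γ} (hA : A.IsWF)
    (h : orderTypeOf A hA ≤ 0) : A = ∅ := by
  letI : WellFoundedLT A := ⟨hA⟩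
  have := Ordinal.type_eq_zero_iff_isEmpty.1 (le_antisymm h zero_le)
  rwa [Set.isEmpty_coe_sort] at this

private theorem rank_eq_typein {A : Set Γ} (hA : A.IsWF) {x : Γ} (hx : x ∈ A)
    (inst : IsWellOrder A (· < ·)) :
    orderTypeOf (A ∩ Set.Iio x) (hA.mono Set.inter_subset_left) =
      @Ordinal.typein A (· < ·) inst ⟨x, hx⟩ := by
  letI : WellFoundedLT A := ⟨hA⟩
  letI : WellFoundedLT (A ∩ Set.Iio x : Set Γ) := ⟨hA.mono Set.inter_subset_left⟩
  rw [← Ordinal.type_subrel]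
  refine Ordinal.type_eq.2 ⟨?_⟩
  exact {
    toFun := fun a => ⟨⟨a.1, a.2.1⟩, a.2.2⟩
    invFun := fun b => ⟨b.1.1, ⟨b.1.2, b.2⟩⟩
    left_inv := fun a => rfl
    right_inv := fun b => rfl
    map_rel_iff' := Iff.rfl }

/-- the rank of an element is smaller than the order type. -/
theorem rank_lt {A : Set Γ} (hA : A.IsWF) {x : Γ} (hx : x ∈ A) :
    orderTypeOf (A ∩ Set.Iio x) (hA.mono Set.inter_subset_left) < orderTypeOf A hA := by
  letI : WellFoundedLT A := ⟨hA⟩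
  rw [rank_eq_typein hA hx inferInstance]
  exact Ordinal.typein_lt_type _ _

/-- rank comparison within a set. -/
theorem rank_lt_rank {A : Set Γ} (hA : A.IsWF) {x z : Γ} (hx : x ∈ A) (hxz : x < z) :
    orderTypeOf (A ∩ Set.Iio x) (hA.mono Set.inter_subset_left) <
      orderTypeOf (A ∩ Set.Iio z) (hA.mono Set.inter_subset_left) := by
  have h1 : (A ∩ Set.Iio z) ∩ Set.Iio x = A ∩ Set.Iio x := by
    ext y
    exact ⟨fun hy => ⟨hy.1.1, hy.2⟩, fun hy => ⟨⟨hy.1, hy.2.trans hxz⟩, hy.2⟩⟩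
  have h2 := rank_lt (A := A ∩ Set.Iio z) (hA.mono Set.inter_subset_left) (x := x) ⟨hx, hxz⟩
  rwa [orderTypeOf_congr _ (hA.mono Set.inter_subset_left) h1] at h2

theorem rank_le_rank {A : Set Γ} (hA : A.IsWF) {x z : Γ} (hxz : x ≤ z) :
    orderTypeOf (A ∩ Set.Iio x) (hA.mono Set.inter_subset_left) ≤
      orderTypeOf (A ∩ Set.Iio z) (hA.mono Set.inter_subset_left) :=
  orderTypeOf_mono _ _ (Set.inter_subset_inter_right A (Set.Iio_subset_Iio hxz))

/-- bounding the order type via ranks. -/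
theorem orderTypeOf_le_of_forall_rank_lt {A : Set Γ} (hA : A.IsWF) {c : Ordinal}
    (H : ∀ x (hx : x ∈ A),
      orderTypeOf (A ∩ Set.Iio x) (hA.mono Set.inter_subset_left) < c) :
    orderTypeOf A hA ≤ c := by
  letI : WellFoundedLT A := ⟨hA⟩
  by_contra hc
  obtain ⟨⟨x, hx⟩, he⟩ := Ordinal.typein_surj ((· < ·) : A → A → Prop) (not_le.1 hc)
  have := H x hx
  rw [rank_eq_typein hA hx inferInstance, he] at this
  exact lt_irrefl c this

theorem rank_surj {A : Set Γ} (hA : A.IsWF) {c : Ordinal} (hc : c < orderTypeOf A hA) :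
    ∃ x, ∃ hx : x ∈ A,
      orderTypeOf (A ∩ Set.Iio x) (hA.mono Set.inter_subset_left) = c := by
  letI : WellFoundedLT A := ⟨hA⟩
  obtain ⟨⟨x, hx⟩, he⟩ := Ordinal.typein_surj ((· < ·) : A → A → Prop) hc
  exact ⟨x, hx, by rw [rank_eq_typein hA hx inferInstance, he]⟩

/-- Lower bound: ordered concatenation. -/
theorem add_orderTypeOf_le_union {A B : Set Γ} (hA : A.IsWF) (hB : B.IsWF)
    (hAB : (A ∪ B).IsWF) (h : ∀ a ∈ A, ∀ b ∈ B, a < b) :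
    orderTypeOf A hA + orderTypeOf B hB ≤ orderTypeOf (A ∪ B) hAB := by
  letI : WellFoundedLT A := ⟨hA⟩
  letI : WellFoundedLT B := ⟨hB⟩
  letI : WellFoundedLT (A ∪ B : Set Γ) := ⟨hAB⟩
  rw [show orderTypeOf A hA + orderTypeOf B hB =
    Ordinal.type (Sum.Lex ((· < ·) : A → A → Prop) ((· < ·) : B → B → Prop)) from
    (Ordinal.type_sum_lex _ _).symm]
  refine Ordinal.type_le_iff'.2 ⟨?_⟩
  refine RelEmbedding.ofMonotone
    (Sum.elim (fun a => ⟨a.1, Or.inl a.2⟩) (fun b => ⟨b.1, Or.inr b.2⟩)) ?_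
  rintro (a₁ | b₁) (a₂ | b₂) hlt
  · exact (Sum.lex_inl_inl.1 hlt : a₁ < a₂)
  · exact h _ a₁.2 _ b₂.2
  · exact absurd hlt (by simp [Sum.lex_inr_inl])
  · exact (Sum.lex_inr_inr.1 hlt : b₁ < b₂)

/-- Upper bound: union vs natural sum. -/
theorem orderTypeOf_union_le {A B : Set Γ} (hA : A.IsWF) (hB : B.IsWF)
    (hU : (A ∪ B).IsWF) :
    orderTypeOf (A ∪ B) hU ≤ orderTypeOf A hA ♯ orderTypeOf B hB := by
  -- first, the pointwise rank bound
  have key : ∀ (o : Ordinal), ∀ z,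
      orderTypeOf ((A ∪ B) ∩ Set.Iio z) (hU.mono Set.inter_subset_left) = o →
      orderTypeOf ((A ∪ B) ∩ Set.Iio z) (hU.mono Set.inter_subset_left) ≤
        orderTypeOf (A ∩ Set.Iio z) (hA.mono Set.inter_subset_left) ♯
        orderTypeOf (B ∩ Set.Iio z) (hB.mono Set.inter_subset_left) := by
    intro o
    induction o using Ordinal.induction with
    | h o IHo =>
      intro z ho
      refine orderTypeOf_le_of_forall_rank_lt _ ?_
      intro w hw
      have hwz : w < z := hw.2
      have heq : ((A ∪ B) ∩ Set.Iio z) ∩ Set.Iio w = (A ∪ B) ∩ Set.Iio w := by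
        ext y
        exact ⟨fun hy => ⟨hy.1.1, hy.2⟩, fun hy => ⟨⟨hy.1, hy.2.trans hwz⟩, hy.2⟩⟩
      rw [orderTypeOf_congr _ (hU.mono Set.inter_subset_left) heq]
      have hwo : orderTypeOf ((A ∪ B) ∩ Set.Iio w) (hU.mono Set.inter_subset_left) < o :=
        ho ▸ rank_lt_rank hU hw.1 hwz
      have IHw := IHo _ hwo w rfl
      refine lt_of_le_of_lt IHw ?_
      rcases hw.1 with hwA | hwB
      · exact nadd_lt_nadd_of_lt_of_le (rank_lt_rank hA hwA hwz)
          (rank_le_rank hB hwz.le)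
      · exact nadd_lt_nadd_of_le_of_lt (rank_le_rank hA hwz.le)
          (rank_lt_rank hB hwB hwz)
  refine orderTypeOf_le_of_forall_rank_lt _ ?_
  intro z hz
  refine lt_of_le_of_lt (key _ z rfl) ?_
  rcases hz with hzA | hzB
  · exact nadd_lt_nadd_of_lt_of_le (rank_lt hA hzA)
      (orderTypeOf_mono _ _ Set.inter_subset_left)
  · exact nadd_lt_nadd_of_le_of_lt (orderTypeOf_mono _ _ Set.inter_subset_left)
      (rank_lt hB hzB)

/-- Splitting a well-ordered set according to an ordinal decomposition of its type. -/
theorem orderTypeOf_split {X : Set Γ} (hX : X.IsWF) {γ δ : Ordinal}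
    (h : orderTypeOf X hX ≤ γ + δ) :
    ∃ (X₁ X₂ : Set Γ) (h₁ : X₁.IsWF) (h₂ : X₂.IsWF), X = X₁ ∪ X₂ ∧
      orderTypeOf X₁ h₁ ≤ γ ∧ orderTypeOf X₂ h₂ ≤ δ := by
  classical
  set X₁ : Set Γ := {x | ∃ hx : x ∈ X,
    orderTypeOf (X ∩ Set.Iio x) (hX.mono Set.inter_subset_left) < γ} with hX₁def
  set X₂ : Set Γ := {x | ∃ hx : x ∈ X,
    γ ≤ orderTypeOf (X ∩ Set.Iio x) (hX.mono Set.inter_subset_left)} with hX₂def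
  have hsub₁ : X₁ ⊆ X := fun x hx => hx.1
  have hsub₂ : X₂ ⊆ X := fun x hx => hx.1
  have h₁ : X₁.IsWF := hX.mono hsub₁
  have h₂ : X₂.IsWF := hX.mono hsub₂
  have hXu : X = X₁ ∪ X₂ := by
    ext x
    constructor
    · intro hx
      rcases lt_or_ge (orderTypeOf (X ∩ Set.Iio x) (hX.mono Set.inter_subset_left)) γ with hc | hc
      · exact Or.inl ⟨hx, hc⟩
      · exact Or.inr ⟨hx, hc⟩
    · rintro (hx | hx) <;> exact hx.1
  -- downward closedness: X₁ initial
  have hdown : ∀ x ∈ X₁, X₁ ∩ Set.Iio x = X ∩ Set.Iio x := by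
    intro x hx
    ext y
    constructor
    · intro hy; exact ⟨hsub₁ hy.1, hy.2⟩
    · intro hy
      exact ⟨⟨hy.1, lt_of_lt_of_le (rank_lt_rank hX hy.1 hy.2) (le_of_lt hx.2)⟩, hy.2⟩
  have hlt₁₂ : ∀ a ∈ X₁, ∀ b ∈ X₂, a < b := by
    intro a ha b hb
    by_contra hab
    push_neg at hab
    exact absurd (lt_of_le_of_lt hb.2 (lt_of_le_of_lt (rank_le_rank hX hab) ha.2)) (lt_irrefl _)
  have hτ₁ : orderTypeOf X₁ h₁ ≤ γ := by
    refine orderTypeOf_le_of_forall_rank_lt _ ?_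
    intro x hx
    rw [orderTypeOf_congr (h₁.mono Set.inter_subset_left)
      (hX.mono Set.inter_subset_left) (hdown x hx)]
    exact hx.2
  refine ⟨X₁, X₂, h₁, h₂, hXu, hτ₁, ?_⟩
  refine orderTypeOf_le_of_forall_rank_lt _ ?_
  intro x hx
  -- show that the type of X₁ is exactly γ in this case
  have hτ₁' : orderTypeOf X₁ h₁ = γ := by
    refine le_antisymm hτ₁ ?_
    by_contra hτ
    push_neg at hτ
    obtain ⟨y, hy, hye⟩ := rank_surj hX (lt_of_lt_of_le (lt_of_lt_of_le hτ hx.2)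
      (le_of_lt (rank_lt hX hx.1)))
    have hy₁ : y ∈ X₁ := ⟨hy, by rw [hye]; exact hτ⟩
    have : orderTypeOf (X₁ ∩ Set.Iio y) (h₁.mono Set.inter_subset_left) <
        orderTypeOf X₁ h₁ := rank_lt h₁ hy₁
    rw [orderTypeOf_congr _ (hX.mono Set.inter_subset_left) (hdown y hy₁), hye] at this
    exact lt_irrefl _ this
  -- decompose the initial segment
  have hseg : X ∩ Set.Iio x = X₁ ∪ (X₂ ∩ Set.Iio x) := by
    ext y
    constructor
    · intro hy
      rw [hXu] at hy
      rcases hy.1 with hy₁ | hy₂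
      · exact Or.inl hy₁
      · exact Or.inr ⟨hy₂, hy.2⟩
    · rintro (hy | hy)
      · exact ⟨hsub₁ hy, hlt₁₂ _ hy _ hx⟩
      · exact ⟨hsub₂ hy.1, hy.2⟩
  have hWFseg : (X₁ ∪ (X₂ ∩ Set.Iio x)).IsWF := hX.mono (by
    rw [← hseg]; exact Set.inter_subset_left)
  have hunle := add_orderTypeOf_le_union h₁ (h₂.mono Set.inter_subset_left)
    hWFseg (fun a ha b hb => hlt₁₂ _ ha _ hb.1)
  rw [hτ₁'] at hunle
  have h2 : γ + orderTypeOf (X₂ ∩ Set.Iio x) (h₂.mono Set.inter_subset_left) ≤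
      orderTypeOf (X ∩ Set.Iio x) (hX.mono Set.inter_subset_left) :=
    le_trans hunle (le_of_eq (orderTypeOf_congr _ _ hseg.symm))
  exact (add_lt_add_iff_left γ).1
    (lt_of_le_of_lt h2 (lt_of_lt_of_le (rank_lt hX hx.1) h))


section Sumset

variable {Γ : Type*} [AddCommMonoid Γ] [LinearOrder Γ] [IsOrderedCancelAddMonoid Γ]

theorem orderTypeOf_le_of_empty {A : Set Γ} (hA : A.IsWF) (h : A = ∅) (c : Ordinal) :
    orderTypeOf A hA ≤ c := by
  rw [orderTypeOf_congr hA Set.isWF_empty h, orderTypeOf_empty]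
  exact zero_le

/-- Carruth-type bound for sumsets, with `ω`-power bounds. -/
theorem sumset_orderTypeOf_le (E : Ordinal) :
    ∀ (K : ℕ) (e f : Ordinal), e ♯ f ≤ E → ∀ (m n : ℕ), m + n ≤ K →
    ∀ (A B : Set Γ) (hA : A.IsWF) (hB : B.IsWF) (hAB : (A + B).IsWF),
      orderTypeOf A hA ≤ ω ^ e * m → orderTypeOf B hB ≤ ω ^ f * n →
      orderTypeOf (A + B) hAB ≤ ω ^ (e ♯ f) * (m * n : ℕ) := by
  induction E using Ordinal.induction with
  | h E IHE =>
  intro K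
  induction K with
  | zero =>
    intro e f _ m n hmn A B hA hB hAB hAb _
    have hm : m = 0 := by omega
    subst hm
    rw [Nat.cast_zero, mul_zero] at hAb
    have hAe : A = ∅ := eq_empty_of_orderTypeOf_le_zero hA hAb
    exact orderTypeOf_le_of_empty hAB (by rw [hAe, Set.empty_add]) _
  | succ K IHK =>
    intro e f hef m n hmn A B hA hB hAB hAb hBb
    rcases Nat.eq_zero_or_pos m with rfl | hm
    · rw [Nat.cast_zero, mul_zero] at hAb
      have hAe : A = ∅ := eq_empty_of_orderTypeOf_le_zero hA hAb
      exact orderTypeOf_le_of_empty hAB (by rw [hAe, Set.empty_add]) _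
    rcases Nat.eq_zero_or_pos n with rfl | hn
    · rw [Nat.cast_zero, mul_zero] at hBb
      have hBe : B = ∅ := eq_empty_of_orderTypeOf_le_zero hB hBb
      exact orderTypeOf_le_of_empty hAB (by rw [hBe, Set.add_empty]) _
    by_cases hm2 : 2 ≤ m
    · -- split A
      have hAb' : orderTypeOf A hA ≤ ω ^ e * (1 : ℕ) + ω ^ e * ((m - 1 : ℕ)) := by
        rw [← mul_add]
        refine le_trans hAb (mul_le_mul_right ?_ _)
        norm_cast
        omega
      obtain ⟨A₁, A₂, h₁, h₂, hAu, hτ₁, hτ₂⟩ := orderTypeOf_split hA hAb'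
      have hU : (A₁ + B) ∪ (A₂ + B) = A + B := by rw [hAu, Set.union_add]
      have hAB₁ : (A₁ + B).IsWF := h₁.add hB
      have hAB₂ : (A₂ + B).IsWF := h₂.add hB
      have hb₁ := IHK e f hef 1 n (by omega) A₁ B h₁ hB hAB₁ hτ₁ hBb
      have hb₂ := IHK e f hef (m - 1) n (by omega) A₂ B h₂ hB hAB₂ hτ₂ hBb
      calc orderTypeOf (A + B) hAB
          = orderTypeOf ((A₁ + B) ∪ (A₂ + B)) (hU.symm ▸ hAB) :=
            orderTypeOf_congr _ _ hU.symm
        _ ≤ orderTypeOf (A₁ + B) hAB₁ ♯ orderTypeOf (A₂ + B) hAB₂ :=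
            orderTypeOf_union_le _ _ _
        _ ≤ ω ^ (e ♯ f) * ((1 * n : ℕ)) ♯ ω ^ (e ♯ f) * (((m - 1) * n : ℕ)) :=
            nadd_le_nadd hb₁ hb₂
        _ ≤ ω ^ (e ♯ f) * ((1 * n + (m - 1) * n : ℕ)) := OrdArith.eE _ _ _
        _ = ω ^ (e ♯ f) * ((m * n : ℕ)) := by
            congr 2
            have hm1 : m - 1 + 1 = m := by omega
            calc 1 * n + (m - 1) * n = ((m - 1) + 1) * n := by ring
              _ = m * n := by rw [hm1]
    by_cases hn2 : 2 ≤ n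
    · -- split B
      have hBb' : orderTypeOf B hB ≤ ω ^ f * (1 : ℕ) + ω ^ f * ((n - 1 : ℕ)) := by
        rw [← mul_add]
        refine le_trans hBb (mul_le_mul_right ?_ _)
        norm_cast
        omega
      obtain ⟨B₁, B₂, h₁, h₂, hBu, hτ₁, hτ₂⟩ := orderTypeOf_split hB hBb'
      have hU : (A + B₁) ∪ (A + B₂) = A + B := by rw [hBu, Set.add_union]
      have hAB₁ : (A + B₁).IsWF := hA.add h₁
      have hAB₂ : (A + B₂).IsWF := hA.add h₂
      have hb₁ := IHK e f hef m 1 (by omega) A B₁ hA h₁ hAB₁ hAb hτ₁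
      have hb₂ := IHK e f hef m (n - 1) (by omega) A B₂ hA h₂ hAB₂ hAb hτ₂
      calc orderTypeOf (A + B) hAB
          = orderTypeOf ((A + B₁) ∪ (A + B₂)) (hU.symm ▸ hAB) :=
            orderTypeOf_congr _ _ hU.symm
        _ ≤ orderTypeOf (A + B₁) hAB₁ ♯ orderTypeOf (A + B₂) hAB₂ :=
            orderTypeOf_union_le _ _ _
        _ ≤ ω ^ (e ♯ f) * ((m * 1 : ℕ)) ♯ ω ^ (e ♯ f) * ((m * (n - 1) : ℕ)) :=
            nadd_le_nadd hb₁ hb₂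
        _ ≤ ω ^ (e ♯ f) * ((m * 1 + m * (n - 1) : ℕ)) := OrdArith.eE _ _ _
        _ = ω ^ (e ♯ f) * ((m * n : ℕ)) := by
            congr 2
            have hn1 : n - 1 + 1 = n := by omega
            calc m * 1 + m * (n - 1) = m * ((n - 1) + 1) := by ring
              _ = m * n := by rw [hn1]
    -- m = n = 1
    have hm1 : m = 1 := by omega
    have hn1 : n = 1 := by omega
    subst hm1; subst hn1
    rw [Nat.cast_one, mul_one] at hAb hBb
    rw [show ((1 * 1 : ℕ) : Ordinal) = 1 by norm_num, mul_one]
    -- bound helpers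
    have boundL : ∀ (A' : Set Γ) (hA' : A'.IsWF) (hA'B : (A' + B).IsWF),
        orderTypeOf A' hA' < ω ^ e → orderTypeOf (A' + B) hA'B < ω ^ (e ♯ f) := by
      intro A' hA' hA'B hlt
      rcases eq_or_ne (orderTypeOf A' hA') 0 with hz | hz
      · have hAe : A' = ∅ := eq_empty_of_orderTypeOf_le_zero hA' hz.le
        refine lt_of_le_of_lt (orderTypeOf_le_of_empty hA'B (by rw [hAe, Set.empty_add]) 0) ?_
        exact opow_pos _ omega0_pos
      · set τ := orderTypeOf A' hA' with hτdef
        have he' : log ω τ < e := (lt_opow_iff_log_lt one_lt_omega0 hz).1 hlt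
        have hω : (ω ^ log ω τ : Ordinal) ≠ 0 := (opow_pos _ omega0_pos).ne'
        obtain ⟨m', hm'⟩ := lt_omega0.1 (div_opow_log_lt τ one_lt_omega0)
        have hτb : τ < ω ^ log ω τ * ((m' + 1 : ℕ)) := by
          have := Ordinal.lt_mul_succ_div τ hω
          rwa [hm', show (Order.succ (m' : Ordinal)) = ((m' + 1 : ℕ) : Ordinal) by
            rw [← Ordinal.add_one_eq_succ]; norm_cast] at this
        have hEa : log ω τ ♯ f < E :=
          lt_of_lt_of_le (nadd_lt_nadd_right he' f) hef
        have hb := IHE _ hEa ((m' + 1) + 1) (log ω τ) f le_rfl (m' + 1) 1 le_rfl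
          A' B hA' hB hA'B hτb.le (by rw [Nat.cast_one, mul_one]; exact hBb)
        refine lt_of_le_of_lt hb ?_
        rw [show ((m' + 1) * 1 : ℕ) = (m' + 1 : ℕ) by omega]
        exact omega0_opow_mul_nat_lt (nadd_lt_nadd_right he' f) _
    have boundR : ∀ (B' : Set Γ) (hB' : B'.IsWF) (hAB' : (A + B').IsWF),
        orderTypeOf B' hB' < ω ^ f → orderTypeOf (A + B') hAB' < ω ^ (e ♯ f) := by
      intro B' hB' hAB' hlt
      rcases eq_or_ne (orderTypeOf B' hB') 0 with hz | hz
      · have hBe : B' = ∅ := eq_empty_of_orderTypeOf_le_zero hB' hz.le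
        refine lt_of_le_of_lt (orderTypeOf_le_of_empty hAB' (by rw [hBe, Set.add_empty]) 0) ?_
        exact opow_pos _ omega0_pos
      · set τ := orderTypeOf B' hB' with hτdef
        have hf' : log ω τ < f := (lt_opow_iff_log_lt one_lt_omega0 hz).1 hlt
        have hω : (ω ^ log ω τ : Ordinal) ≠ 0 := (opow_pos _ omega0_pos).ne'
        obtain ⟨m', hm'⟩ := lt_omega0.1 (div_opow_log_lt τ one_lt_omega0)
        have hτb : τ < ω ^ log ω τ * ((m' + 1 : ℕ)) := by
          have := Ordinal.lt_mul_succ_div τ hω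
          rwa [hm', show (Order.succ (m' : Ordinal)) = ((m' + 1 : ℕ) : Ordinal) by
            rw [← Ordinal.add_one_eq_succ]; norm_cast] at this
        have hEa : e ♯ log ω τ < E :=
          lt_of_lt_of_le (nadd_lt_nadd_left hf' e) hef
        have hb := IHE _ hEa (1 + (m' + 1)) e (log ω τ) le_rfl 1 (m' + 1) le_rfl
          A B' hA hB' hAB' (by rw [Nat.cast_one, mul_one]; exact hAb) hτb.le
        refine lt_of_le_of_lt hb ?_
        rw [show (1 * (m' + 1) : ℕ) = (m' + 1 : ℕ) by omega]
        exact omega0_opow_mul_nat_lt (nadd_lt_nadd_left hf' e) _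
    refine orderTypeOf_le_of_forall_rank_lt _ ?_
    intro x hx
    obtain ⟨a, ha, b, hb, rfl⟩ := Set.mem_add.1 hx
    have hincl : (A + B) ∩ Set.Iio (a + b) ⊆
        ((A ∩ Set.Iio a) + B) ∪ (A + (B ∩ Set.Iio b)) := by
      rintro y ⟨hy, hylt⟩
      obtain ⟨c, hc, d, hd, rfl⟩ := Set.mem_add.1 hy
      rcases lt_or_ge c a with hca | hca
      · exact Or.inl (Set.add_mem_add ⟨hc, hca⟩ hd)
      · have hdb : d < b := by
          by_contra hdb
          push_neg at hdb
          exact absurd (add_le_add hca hdb) (not_le.2 hylt)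
        exact Or.inr (Set.add_mem_add hc ⟨hd, hdb⟩)
    have hWF₁ : ((A ∩ Set.Iio a) + B).IsWF := (hA.mono Set.inter_subset_left).add hB
    have hWF₂ : (A + (B ∩ Set.Iio b)).IsWF := hA.add (hB.mono Set.inter_subset_left)
    calc orderTypeOf ((A + B) ∩ Set.Iio (a + b)) (hAB.mono Set.inter_subset_left)
        ≤ orderTypeOf (((A ∩ Set.Iio a) + B) ∪ (A + (B ∩ Set.Iio b))) (hWF₁.union hWF₂) :=
          orderTypeOf_mono _ _ hincl
      _ ≤ orderTypeOf ((A ∩ Set.Iio a) + B) hWF₁ ♯ orderTypeOf (A + (B ∩ Set.Iio b)) hWF₂ :=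
          orderTypeOf_union_le _ _ _
      _ < ω ^ (e ♯ f) := OrdArith.nadd_principal _ _ _
          (boundL _ _ _ (lt_of_lt_of_le (rank_lt hA ha) hAb))
          (boundR _ _ _ (lt_of_lt_of_le (rank_lt hB hb) hBb))

end Sumset


section Main

variable {Γ : Type*} [AddCommGroup Γ] [LinearOrder Γ] [IsOrderedAddMonoid Γ]

/-- iterated sumsets -/
def iterSum (C : Set Γ) : ℕ → Set Γ
  | 0 => {0}
  | j + 1 => iterSum C j + C

theorem iterSum_isWF {C : Set Γ} (hC : C.IsWF) : ∀ j, (iterSum C j).IsWF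
  | 0 => Set.isWF_singleton
  | j + 1 => (iterSum_isWF hC j).add hC

theorem sum_mem_iterSum {C : Set Γ} (h0 : (0 : Γ) ∈ C) :
    ∀ (j : ℕ) (l : Multiset Γ), (∀ y ∈ l, y ∈ C) → l.card ≤ j → l.sum ∈ iterSum C j := by
  have hz : ∀ j, (0 : Γ) ∈ iterSum C j := by
    intro j
    induction j with
    | zero => exact rfl
    | succ j IH =>
      have := Set.add_mem_add IH h0
      rwa [add_zero] at this
  intro j
  induction j with
  | zero =>
    intro l hl hc
    have hl0 : l = 0 := Multiset.card_eq_zero.1 (Nat.le_zero.1 hc)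
    subst hl0
    rw [Multiset.sum_zero]
    exact rfl
  | succ j IH =>
    intro l hl hc
    rcases eq_or_ne l 0 with rfl | hne
    · simpa using hz (j + 1)
    · obtain ⟨y, hy⟩ := Multiset.exists_mem_of_ne_zero hne
      have hl' : l = y ::ₘ l.erase y := (Multiset.cons_erase hy).symm
      rw [hl', Multiset.sum_cons, add_comm y (l.erase y).sum]
      refine Set.add_mem_add (IH _ (fun z hz' => hl z (Multiset.mem_of_mem_erase hz')) ?_)
        (hl y hy)
      have hcard := Multiset.card_erase_of_mem hy
      rw [hcard]
      exact Nat.pred_le_pred hc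

theorem iterSum_type_le {C : Set Γ} (hC : C.IsWF) {u : Ordinal}
    (hCu : orderTypeOf C hC ≤ ω ^ u) :
    ∀ j : ℕ, orderTypeOf (iterSum C j) (iterSum_isWF hC j) ≤ ω ^ (u ⨳ (j : Ordinal)) := by
  intro j
  induction j with
  | zero =>
    rw [Nat.cast_zero, nmul_zero, opow_zero]
    refine orderTypeOf_le_of_forall_rank_lt _ ?_
    intro y hy
    have hy0 : y = (0 : Γ) := hy
    subst hy0
    have he : (iterSum C 0 ∩ Set.Iio (0 : Γ)) = (∅ : Set Γ) := by
      ext z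
      simp only [Set.mem_inter_iff, Set.mem_Iio, Set.mem_empty_iff_false, iff_false, not_and]
      intro hz1 hlt
      have hz0 : z = 0 := hz1
      subst hz0
      exact lt_irrefl 0 hlt
    rw [orderTypeOf_congr _ Set.isWF_empty he, orderTypeOf_empty]
    exact zero_lt_one
  | succ j IH =>
    have hWF : ((iterSum C j) + C).IsWF := (iterSum_isWF hC j).add hC
    have hsum := sumset_orderTypeOf_le ((u ⨳ (j : Ordinal)) ♯ u) 2
      (u ⨳ (j : Ordinal)) u le_rfl 1 1 le_rfl (iterSum C j) C (iterSum_isWF hC j) hC hWF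
      (by rw [Nat.cast_one, mul_one]; exact IH)
      (by rw [Nat.cast_one, mul_one]; exact hCu)
    have heq : ((u ⨳ (j : Ordinal)) ♯ u) = u ⨳ ((j + 1 : ℕ) : Ordinal) := by
      rw [show ((j + 1 : ℕ) : Ordinal) = (j : Ordinal) + 1 by norm_cast, nmul_add_one]
    calc orderTypeOf (iterSum C (j + 1)) (iterSum_isWF hC (j + 1))
        = orderTypeOf ((iterSum C j) + C) hWF := orderTypeOf_congr _ _ rfl
      _ ≤ ω ^ ((u ⨳ (j : Ordinal)) ♯ u) * ((1 * 1 : ℕ)) := hsum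
      _ = ω ^ (u ⨳ ((j + 1 : ℕ) : Ordinal)) := by
          rw [heq, show ((1 * 1 : ℕ) : Ordinal) = 1 by norm_num, mul_one]

theorem closure_type_le : ∀ (α : Ordinal) (S : Set Γ) (hS : S.IsWF), (0 : Γ) ∉ S →
    ∀ (hpos : ∀ x ∈ S, 0 ≤ x), orderTypeOf S hS ≤ α →
    ∀ (hT : ((AddSubmonoid.closure S : AddSubmonoid Γ) : Set Γ).IsWF),
    orderTypeOf ((AddSubmonoid.closure S : AddSubmonoid Γ) : Set Γ) hT ≤ ω ^ (ω ⨳ α) := by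
  intro α
  induction α using Ordinal.induction with
  | h α IH =>
  intro S hS h0 hpos hle hT
  have hTpos : ∀ t ∈ ((AddSubmonoid.closure S : AddSubmonoid Γ) : Set Γ), 0 ≤ t := fun t ht =>
    AddSubmonoid.closure_induction (fun x hx => hpos x hx) le_rfl
      (fun x y _ _ hx hy => add_nonneg hx hy) ht
  refine orderTypeOf_le_of_forall_rank_lt hT ?_
  intro x hx
  rcases eq_or_ne x 0 with rfl | hx0
  · have he : ((AddSubmonoid.closure S : AddSubmonoid Γ) : Set Γ) ∩ Set.Iio (0 : Γ) = ∅ := by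
      ext y
      simp only [Set.mem_inter_iff, Set.mem_Iio, Set.mem_empty_iff_false, iff_false, not_and]
      intro hy hlt
      exact absurd hlt (not_lt.2 (hTpos y hy))
    rw [orderTypeOf_congr _ Set.isWF_empty he, orderTypeOf_empty]
    exact opow_pos _ omega0_pos
  obtain ⟨me, hmeS, hmesum⟩ := AddSubmonoid.exists_multiset_of_mem_closure hx
  have hm0 : me ≠ 0 := by
    rintro rfl
    rw [Multiset.sum_zero] at hmesum
    exact hx0 hmesum.symm
  set s := me.toFinset.max' (Multiset.toFinset_nonempty.2 hm0) with hsdef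
  have hsm : s ∈ me := Multiset.mem_toFinset.1 (me.toFinset.max'_mem _)
  have hsS : s ∈ S := hmeS s hsm
  have hspos : 0 < s := lt_of_le_of_ne (hpos s hsS) (fun h => h0 (h ▸ hsS))
  have hmax : ∀ y ∈ me, y ≤ s := fun y hy => me.toFinset.le_max' y (Multiset.mem_toFinset.2 hy)
  set k := me.card with hk
  -- bounds for the two halves of S
  have hS₁wf : (S ∩ Set.Iio s).IsWF := hS.mono Set.inter_subset_left
  set β := orderTypeOf (S ∩ Set.Iio s) hS₁wf with hβ
  have hβα : β < α := lt_of_lt_of_le (rank_lt hS hsS) hle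
  have hT₁ : ((AddSubmonoid.closure (S ∩ Set.Iio s) : AddSubmonoid Γ) : Set Γ).IsWF :=
    ((hS₁wf.isPWO).addSubmonoid_closure (fun y hy => hpos y hy.1)).isWF
  have IH₁ := IH β hβα (S ∩ Set.Iio s) hS₁wf (fun h => h0 h.1)
    (fun y hy => hpos y hy.1) le_rfl hT₁
  have hS₂wf : (S ∩ Set.Ici s).IsWF := hS.mono Set.inter_subset_left
  set τ₂ := orderTypeOf (S ∩ Set.Ici s) hS₂wf with hτ₂
  have hβτ : β + τ₂ ≤ α := by
    have hcup : (S ∩ Set.Iio s) ∪ (S ∩ Set.Ici s) = S := by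
      ext y
      constructor
      · rintro (hy | hy) <;> exact hy.1
      · intro hy
        rcases lt_or_ge y s with h | h
        · exact Or.inl ⟨hy, h⟩
        · exact Or.inr ⟨hy, h⟩
    refine le_trans ?_ hle
    refine le_trans (add_orderTypeOf_le_union hS₁wf hS₂wf
      (hS.mono (by rw [hcup])) ?_) (le_of_eq (orderTypeOf_congr _ _ hcup))
    intro a ha b hb
    exact lt_of_lt_of_le ha.2 hb.2
  have hτ₂1 : τ₂ ≠ 0 := by
    intro h
    have hSe : (S ∩ Set.Ici s) = ∅ := eq_empty_of_orderTypeOf_le_zero hS₂wf h.le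
    have hmem : s ∈ S ∩ Set.Ici s := ⟨hsS, le_refl s⟩
    rw [hSe] at hmem
    exact Set.notMem_empty s hmem
  have hτ₂d : τ₂ ≤ α - β := (Ordinal.le_sub_of_le hβα.le).2 hβτ
  have hd0 : α - β ≠ 0 := fun h => hτ₂1 (le_antisymm (h ▸ hτ₂d) zero_le)
  set T' := log ω (α - β) with hT'
  have hωT : ω ^ T' ≤ α - β := opow_log_le_self ω hd0
  have hdT : α - β < ω ^ (T' + 1) := by
    have := lt_opow_succ_log_self one_lt_omega0 (α - β)
    rwa [← Ordinal.add_one_eq_succ] at this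
  have hlimT : Order.IsSuccLimit (ω ^ (T' + 1) : Ordinal) :=
    isSuccLimit_opow_left isSuccLimit_omega0 (fun h => (Ordinal.succ_ne_zero T')
      (by rwa [Ordinal.add_one_eq_succ] at h))
  set C : Set Γ := {0} ∪ (S ∩ Set.Ici s) with hC
  have hCwf : C.IsWF := Set.isWF_singleton.union hS₂wf
  have hτC : orderTypeOf C hCwf ≤ ω ^ (T' + 1) := by
    refine le_trans (orderTypeOf_union_le Set.isWF_singleton hS₂wf hCwf) ?_
    have h1 : orderTypeOf ({0} : Set Γ) Set.isWF_singleton ≤ 1 := by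
      refine orderTypeOf_le_of_forall_rank_lt _ ?_
      intro y hy
      have hy0 : y = (0 : Γ) := hy
      subst hy0
      have he : (({(0 : Γ)} : Set Γ) ∩ Set.Iio (0 : Γ)) = (∅ : Set Γ) := by
        ext z
        simp only [Set.mem_inter_iff, Set.mem_singleton_iff, Set.mem_Iio,
          Set.mem_empty_iff_false, iff_false, not_and]
        rintro rfl
        exact lt_irrefl 0
      rw [orderTypeOf_congr _ Set.isWF_empty he, orderTypeOf_empty]
      exact zero_lt_one
    calc orderTypeOf ({0} : Set Γ) Set.isWF_singleton ♯ τ₂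
        ≤ 1 ♯ τ₂ := nadd_le_nadd_right h1 _
      _ = Order.succ τ₂ := one_nadd τ₂
      _ ≤ ω ^ (T' + 1) := (hlimT.succ_lt (lt_of_le_of_lt hτ₂d hdT)).le
  -- the inclusion
  have hincl : ((AddSubmonoid.closure S : AddSubmonoid Γ) : Set Γ) ∩ Set.Iio x ⊆
      ((AddSubmonoid.closure (S ∩ Set.Iio s) : AddSubmonoid Γ) : Set Γ) + iterSum C (k - 1) := by
    rintro t ⟨htT, htx⟩
    obtain ⟨l, hlS, hlsum⟩ := AddSubmonoid.exists_multiset_of_mem_closure htT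
    classical
    set l₁ := l.filter (fun y => y < s) with hl₁
    set l₂ := l.filter (fun y => ¬ y < s) with hl₂
    have hl12 : l₁ + l₂ = l := Multiset.filter_add_not _ l
    have hsum12 : l₁.sum + l₂.sum = t := by rw [← Multiset.sum_add, hl12, hlsum]
    have hu : l₁.sum ∈ (AddSubmonoid.closure (S ∩ Set.Iio s) : AddSubmonoid Γ) := by
      refine AddSubmonoid.multiset_sum_mem _ _ ?_
      intro y hy
      exact AddSubmonoid.subset_closure ⟨hlS y (Multiset.mem_of_mem_filter hy),
        Multiset.of_mem_filter (p := fun y => y < s) hy⟩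
    have hunn : 0 ≤ l₁.sum :=
      Multiset.sum_nonneg (fun y hy => hpos y (hlS y (Multiset.mem_of_mem_filter hy)))
    have hv2 : ∀ y ∈ l₂, s ≤ y := fun y hy =>
      le_of_not_gt (Multiset.of_mem_filter (p := fun y => ¬ y < s) hy)
    have hjv : l₂.card • s ≤ l₂.sum := Multiset.card_nsmul_le_sum hv2
    have hxk : x ≤ k • s := by rw [← hmesum]; exact Multiset.sum_le_card_nsmul me s hmax
    have hjk : l₂.card < k := by
      by_contra hcon
      push_neg at hcon
      have h1 : k • s ≤ l₂.card • s := nsmul_le_nsmul_left (hpos s hsS) hcon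
      have h2 : l₂.sum ≤ t := by
        rw [← hsum12]
        exact le_add_of_nonneg_left hunn
      have : x < x := lt_of_le_of_lt hxk
        (lt_of_le_of_lt (h1.trans (hjv.trans h2)) (lt_of_lt_of_le htx (le_refl x)))
      exact lt_irrefl x this
    have hvmem : l₂.sum ∈ iterSum C (k - 1) :=
      sum_mem_iterSum (C := C) (show (0 : Γ) ∈ C from Or.inl rfl) (k - 1) l₂
        (fun y hy => Or.inr ⟨hlS y (Multiset.mem_of_mem_filter hy), hv2 y hy⟩) (by omega)
    rw [← hsum12]
    exact Set.add_mem_add hu hvmem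
  -- final bound
  have hWFsum : (((AddSubmonoid.closure (S ∩ Set.Iio s) : AddSubmonoid Γ) : Set Γ) +
      iterSum C (k - 1)).IsWF := hT₁.add (iterSum_isWF hCwf _)
  have hiter := iterSum_type_le hCwf hτC (k - 1)
  have hsum := sumset_orderTypeOf_le ((ω ⨳ β) ♯ ((T' + 1) ⨳ ((k - 1 : ℕ) : Ordinal))) 2
    (ω ⨳ β) ((T' + 1) ⨳ ((k - 1 : ℕ) : Ordinal)) le_rfl 1 1 le_rfl _ _
    hT₁ (iterSum_isWF hCwf _) hWFsum
    (by rw [Nat.cast_one, mul_one]; exact IH₁)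
    (by rw [Nat.cast_one, mul_one]; exact hiter)
  refine lt_of_le_of_lt ((orderTypeOf_mono _ hWFsum hincl).trans hsum) ?_
  rw [show ((1 * 1 : ℕ) : Ordinal) = 1 by norm_num, mul_one]
  refine (opow_lt_opow_iff_right one_lt_omega0).2 ?_
  calc (ω ⨳ β) ♯ ((T' + 1) ⨳ ((k - 1 : ℕ) : Ordinal))
      < ω ⨳ (β + ω ^ T') := OrdArith.d2 (OrdArith.nmul_nat_lt_opow_succ T' (k - 1))
    _ ≤ ω ⨳ α := nmul_le_nmul_left (by
        calc β + ω ^ T' ≤ β + (α - β) := add_le_add_right hωT β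
          _ = α := Ordinal.add_sub_cancel_of_le hβα.le) ω

end Main

end SetLayer

end Auxiliary

open NaturalOps in
/-- The additive monoid generated by a well-ordered set of nonnegative elements of an
ordered abelian group is well-ordered, with order type at most `ω ^ (ω ⨳ α)` where `⨳`
is the natural (Hessenberg) product. -/
theorem closure_isWF_and_orderType_le {Γ : Type*} [AddCommGroup Γ] [LinearOrder Γ] [IsOrderedAddMonoid Γ]
    (S : Set Γ) (hpos : ∀ x ∈ S, 0 ≤ x) (hS : S.IsWF) (α : Ordinal)
    (hα : orderTypeOf S hS = α) :
    ∃ h : ((AddSubmonoid.closure S : AddSubmonoid Γ) : Set Γ).IsWF,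
      orderTypeOf ((AddSubmonoid.closure S : AddSubmonoid Γ) : Set Γ) h ≤
        Ordinal.omega0 ^ (Ordinal.omega0 ⨳ α) := by
  subst hα
  have hT : ((AddSubmonoid.closure S : AddSubmonoid Γ) : Set Γ).IsWF :=
    ((hS.isPWO).addSubmonoid_closure hpos).isWF
  refine ⟨hT, ?_⟩
  have hij : AddSubmonoid.closure (S \ {0}) = AddSubmonoid.closure S := by
    refine le_antisymm (AddSubmonoid.closure_mono Set.diff_subset) ?_
    rw [AddSubmonoid.closure_le]
    intro y hy
    rcases eq_or_ne y 0 with rfl | hy0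
    · exact AddSubmonoid.zero_mem _
    · exact AddSubmonoid.subset_closure ⟨hy, hy0⟩
  have hS' : (S \ {0} : Set Γ).IsWF := hS.mono Set.diff_subset
  have hT' : ((AddSubmonoid.closure (S \ {0}) : AddSubmonoid Γ) : Set Γ).IsWF := by
    rw [hij]; exact hT
  have hmain := SetLayer.closure_type_le (orderTypeOf S hS) (S \ {0}) hS'
    (fun h => h.2 rfl) (fun x hx => hpos x hx.1)
    (SetLayer.orderTypeOf_mono hS' hS Set.diff_subset) hT'
  calc orderTypeOf ((AddSubmonoid.closure S : AddSubmonoid Γ) : Set Γ) hT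
      = orderTypeOf ((AddSubmonoid.closure (S \ {0}) : AddSubmonoid Γ) : Set Γ) hT' :=
        SetLayer.orderTypeOf_congr _ _ (by rw [hij])
    _ ≤ Ordinal.omega0 ^ (Ordinal.omega0 ⨳ orderTypeOf S hS) := hmain

end
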